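/- arXiv:1403.6788 — 3 statements merged into one kernel-verified Lean document; each statement's English description precedes it below -/
import Mathlib

section
/- Let A be a unital C*-algebra with T(A) ≠ ∅ and let a ∈ M_k(A) be positive. Suppose there are real numbers 0 < α < β such that α < d_τ(a) < β for every τ in a closed subset Y of T(A). Then there exist ε > 0 and an open neighborhood U of Y in T(A) such that α < d_τ((a − ε)₊) < β for all τ ∈ U. -/
open Filter Set Topology MeasureTheory
open scoped ComplexOrder Matrix.Norms.L2Operator

noncomputable section

universe u v

/-- A tracial state on a unital C*-algebra `A`, viewed as an element of the weak-* dual: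
a positive linear functional `τ` with `τ 1 = 1` and `τ (a b) = τ (b a)`. -/
def IsTracialState (A : Type u) [CStarAlgebra A] (τ : WeakDual ℂ A) : Prop :=
  τ 1 = 1 ∧ (∀ a : A, 0 ≤ τ (star a * a)) ∧ ∀ a b : A, τ (a * b) = τ (b * a)

/-- The tracial state space `T(A)`, as a subset of the weak-* dual (so that it carries the
weak-* topology). -/
def TS (A : Type u) [CStarAlgebra A] : Set (WeakDual ℂ A) := {τ | IsTracialState A τ}

/-- `d_φ(a) = sup_{n ≥ 1} φ(f_{1/n}(a))`, where `f_η(t) = min (t/η) 1`, for a (positive)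
linear functional `φ` on a unital C*-algebra `B`. -/
noncomputable def dRank {B : Type v} [CStarAlgebra B] (φ : B → ℂ) (a : B) : ℝ :=
  ⨆ n : ℕ, (φ (cfc (fun t : ℝ => min (((n : ℝ) + 1) * t) 1) a)).re

/-- The matrix algebra `M_k(A)` (as a star `ℂ`-algebra). -/
abbrev Mat (k : ℕ) (A : Type u) : Type u := Matrix (Fin k) (Fin k) A

/-- The unnormalized trace `τ_k((a_ij)) = ∑ i, τ (a_ii)` on `M_k(A)`, transported to a
C*-algebra `B` which realizes `M_k(A)` via a star-algebra isomorphism `e`. -/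
noncomputable def matTr {A : Type u} [CStarAlgebra A] {k : ℕ} {B : Type v} [CStarAlgebra B]
    (τ : WeakDual ℂ A) (e : Mat k A ≃⋆ₐ[ℂ] B) : B → ℂ :=
  fun b => ∑ i, τ (e.symm b i i)

/-- `(a - ε)₊`, via the continuous functional calculus. -/
noncomputable def cutMinus {B : Type v} [CStarAlgebra B] (a : B) (ε : ℝ) : B :=
  cfc (fun t : ℝ => max (t - ε) 0) a

/-- `f_η(a)` where `f_η(t) = min (t/η) 1`, via the continuous functional calculus. -/
noncomputable def fEtaCFC {B : Type v} [CStarAlgebra B] (η : ℝ) (a : B) : B :=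
  cfc (fun t : ℝ => min (t / η) 1) a

/-- `a^{1/2}`, via the continuous functional calculus. -/
noncomputable def sqrtCFC {B : Type v} [CStarAlgebra B] (a : B) : B :=
  cfc (fun t : ℝ => Real.sqrt t) a

/-- Cuntz subequivalence `a ≾ b` in a C*-algebra `B`. -/
def CuntzBelow {B : Type v} [CStarAlgebra B] (a b : B) : Prop :=
  ∃ x : ℕ → B, Tendsto (fun n => ‖x n * b * star (x n) - a‖) atTop (𝓝 0)

/-- The upper-left-corner embedding of `M_k(A)` into `M_m(A)`. -/
def matInc {A : Type u} [Zero A] {k m : ℕ} (M : Mat k A) : Mat m A :=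
  Matrix.of fun i j => if h : (i : ℕ) < k ∧ (j : ℕ) < k then M ⟨i.1, h.1⟩ ⟨j.1, h.2⟩ else 0

/-- Strict comparison of positive elements: for positive `a ∈ M_k(A)`, `b ∈ M_l(A)`,
if `d_τ(a) < d_τ(b)` for every tracial state `τ`, then `a ≾ b` in `M_{max k l}(A)`
(realized as a C*-algebra `B` via a star-algebra isomorphism). -/
def StrictComparison (A : Type u) [CStarAlgebra A] : Prop :=
  ∀ (k l : ℕ) (B : Type u) (_ : CStarAlgebra B) (_ : PartialOrder B) (_ : StarOrderedRing B)
    (e : Mat (max k l) A ≃⋆ₐ[ℂ] B) (a : Mat k A) (b : Mat l A),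
    0 ≤ e (matInc a) → 0 ≤ e (matInc b) →
    (∀ τ ∈ TS A, dRank (matTr τ e) (e (matInc a)) < dRank (matTr τ e) (e (matInc b))) →
    CuntzBelow (e (matInc a)) (e (matInc b))

/-- The extreme boundary `∂_e T(A)` of the tracial state space. -/
def extTS (A : Type u) [CStarAlgebra A] : Set (WeakDual ℂ A) :=
  Set.extremePoints ℝ (TS A)

/-- A C*-algebra is simple if its only closed two-sided ideals are `0` and the whole algebra. -/
def IsSimpleCStar (A : Type u) [CStarAlgebra A] : Prop :=
  ∀ I : TwoSidedIdeal A, IsClosed (I : Set A) → (I : Set A) = {0} ∨ (I : Set A) = Set.univ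

/-- `F_σ` subsets: countable unions of closed sets. -/
def IsFSigmaIn {E : Type v} [TopologicalSpace E] (X : Set E) : Prop :=
  ∃ C : ℕ → Set E, (∀ n, IsClosed (C n)) ∧ X = ⋃ n, C n

/-- Covering dimension at most `m`: every finite open cover admits a finite open refinement
in which every point lies in at most `m + 1` members. -/
def CovDimLE (X : Type v) [TopologicalSpace X] (m : ℕ) : Prop :=
  ∀ (n : ℕ) (U : Fin n → Set X), (∀ i, IsOpen (U i)) → (⋃ i, U i) = univ →
    ∃ (p : ℕ) (V : Fin p → Set X), (∀ j, IsOpen (V j)) ∧ (⋃ j, V j) = univ ∧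
      (∀ j, ∃ i, V j ⊆ U i) ∧ ∀ x : X, {j | x ∈ V j}.ncard ≤ m + 1

/-- Zero-dimensionality: the topology has a basis of clopen sets. -/
def ZeroDim (X : Type v) [TopologicalSpace X] : Prop :=
  ∀ (x : X) (U : Set X), IsOpen U → x ∈ U → ∃ V : Set X, IsClopen V ∧ x ∈ V ∧ V ⊆ U

/-- Real-valued functions that are affine on `T(A)`. -/
def AffineOnTS {A : Type u} [CStarAlgebra A] (f : WeakDual ℂ A → ℝ) : Prop :=
  ∀ σ ∈ TS A, ∀ σ' ∈ TS A, ∀ t : ℝ, 0 ≤ t → t ≤ 1 →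
    f (t • σ + (1 - t) • σ') = t * f σ + (1 - t) * f σ'

/-- A Borel measure `μ` represents `τ` if `f τ = ∫ f dμ` for every weak-* continuous
affine real-valued function `f` on `T(A)`. -/
def Represents {A : Type u} [CStarAlgebra A] [MeasurableSpace (WeakDual ℂ A)]
    (μ : Measure (WeakDual ℂ A)) (τ : WeakDual ℂ A) : Prop :=
  ∀ f : WeakDual ℂ A → ℝ, ContinuousOn f (TS A) → AffineOnTS f → f τ = ∫ σ, f σ ∂μ

/-- A metric space structure is compatible if it induces the given topology. -/
def CompatibleMetric (X : Type v) [t : TopologicalSpace X] (m : MetricSpace X) : Prop :=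
  m.toUniformSpace.toTopologicalSpace = t

/-- Positivity of a matrix over a star ring: `M = Nᴴ * N` for some `N`. -/
def MatPos {R : Type v} [Ring R] [StarRing R] {n : ℕ} (M : Matrix (Fin n) (Fin n) R) : Prop :=
  ∃ N : Matrix (Fin n) (Fin n) R, M = N.conjTranspose * N

/-- Completely positive `ℂ`-linear maps: all matrix amplifications preserve positivity. -/
def IsCP {R : Type u} {S : Type v} [Ring R] [StarRing R] [Algebra ℂ R]
    [Ring S] [StarRing S] [Algebra ℂ S] (φ : R →ₗ[ℂ] S) : Prop :=
  ∀ (n : ℕ) (M : Matrix (Fin n) (Fin n) R), MatPos M → MatPos (M.map ⇑φ)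

/-- Completely positive contractive (cpc) maps. -/
def IsCPC {R : Type u} {S : Type v} [NormedRing R] [StarRing R] [NormedAlgebra ℂ R]
    [NormedRing S] [StarRing S] [NormedAlgebra ℂ S] (φ : R →ₗ[ℂ] S) : Prop :=
  IsCP φ ∧ ∀ x : R, ‖φ x‖ ≤ ‖x‖

/-- cpc order zero maps from `M_k(ℂ)` (with the operator norm) into `S`:
cpc maps preserving orthogonality of positive elements. -/
def IsCPCOrderZero {S : Type v} [NormedRing S] [StarRing S] [NormedAlgebra ℂ S] {k : ℕ}
    (φ : Matrix (Fin k) (Fin k) ℂ →ₗ[ℂ] S) : Prop :=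
  IsCPC φ ∧ ∀ x y : Matrix (Fin k) (Fin k) ℂ, x.PosSemidef → y.PosSemidef → x * y = 0 →
    φ x * φ y = 0

/-- Nuclearity, via the completely positive approximation property. -/
def IsNuclear (A : Type u) [CStarAlgebra A] : Prop :=
  ∀ (G : Finset A) (ε : ℝ), 0 < ε →
    ∃ (n : ℕ) (ψ : A →ₗ[ℂ] Matrix (Fin n) (Fin n) ℂ) (φ : Matrix (Fin n) (Fin n) ℂ →ₗ[ℂ] A),
      IsCPC ψ ∧ IsCPC φ ∧ ∀ a ∈ G, ‖φ (ψ a) - a‖ < ε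


section Lemmas

variable {A : Type u} [CStarAlgebra A] {k : ℕ} {B : Type v} [CStarAlgebra B]
  [PartialOrder B] [StarOrderedRing B] (e : Mat k A ≃⋆ₐ[ℂ] B)

lemma matTr_add (τ : WeakDual ℂ A) (x y : B) :
    matTr τ e (x + y) = matTr τ e x + matTr τ e y := by
  simp [matTr, map_add, Matrix.add_apply, Finset.sum_add_distrib]

lemma matTr_nonneg {τ : WeakDual ℂ A} (hτ : τ ∈ TS A) {b : B} (hb : 0 ≤ b) :
    0 ≤ matTr τ e b := by
  have hsq : star (CFC.sqrt b) * CFC.sqrt b = b := by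
    rw [(IsSelfAdjoint.of_nonneg (CFC.sqrt_nonneg b)).star_eq]
    exact CFC.sqrt_mul_sqrt_self b hb
  set M : Mat k A := e.symm (CFC.sqrt b) with hM
  have hb' : e.symm b = star M * M := by
    rw [← hsq, map_mul, map_star]
  rw [matTr]
  simp only [hb']
  refine Finset.sum_nonneg fun i _ => ?_
  have : (star M * M) i i = ∑ j, star (M j i) * M j i := by
    simp [Matrix.mul_apply, Matrix.star_apply]
  rw [this, map_sum]
  exact Finset.sum_nonneg fun j _ => hτ.2.1 (M j i)

lemma matTr_mono {τ : WeakDual ℂ A} (hτ : τ ∈ TS A) {x y : B} (hxy : x ≤ y) :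
    (matTr τ e x).re ≤ (matTr τ e y).re := by
  have h0 : 0 ≤ matTr τ e (y - x) := matTr_nonneg e hτ (sub_nonneg.2 hxy)
  have hsub : matTr τ e (y - x) = matTr τ e y - matTr τ e x := by
    simp [matTr, map_sub, Matrix.sub_apply, Finset.sum_sub_distrib]
  rw [hsub] at h0
  have := Complex.le_def.1 h0
  simp only [Complex.zero_re, Complex.sub_re] at this
  linarith [this.1]

lemma matTr_algebraMap {τ : WeakDual ℂ A} (hτ1 : τ 1 = 1) (r : ℝ) :
    matTr τ e (algebraMap ℝ B r) = (k : ℂ) * r := by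
  have h1 : algebraMap ℝ B r = (r : ℂ) • (1 : B) := by
    rw [IsScalarTower.algebraMap_apply ℝ ℂ B, Algebra.algebraMap_eq_smul_one]
    norm_num
  have h2 : e.symm ((r : ℂ) • (1 : B)) = (r : ℂ) • (1 : Mat k A) := by
    rw [_root_.map_smul, map_one]
  rw [matTr]
  simp only [h1, h2]
  have : ∀ i : Fin k, τ (((r : ℂ) • (1 : Mat k A)) i i) = (r : ℂ) := by
    intro i
    rw [Matrix.smul_apply, Matrix.one_apply_eq, _root_.map_smul, hτ1]
    simp
  rw [Finset.sum_congr rfl fun i _ => this i]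
  simp [mul_comm]

lemma matTr_continuous (c : Mat k A) :
    Continuous fun σ : WeakDual ℂ A => (∑ i, σ (c i i)).re := by
  exact Complex.continuous_re.comp (continuous_finset_sum _ fun i _ => WeakDual.eval_continuous _)

end Lemmas
section Lemmas2

variable {A : Type u} [CStarAlgebra A]

lemma ts_cfc_nonneg {τ : WeakDual ℂ A} (hτ : τ ∈ TS A) {h : A} (hh : IsSelfAdjoint h)
    {f : ℝ → ℝ} (hf : Continuous f) (hf0 : ∀ x ∈ spectrum ℝ h, 0 ≤ f x) :
    0 ≤ τ (cfc f h) := by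
  have hcs : Continuous fun t : ℝ => Real.sqrt (f t) := Real.continuous_sqrt.comp hf
  have hss : star (cfc (fun t : ℝ => Real.sqrt (f t)) h) *
      cfc (fun t : ℝ => Real.sqrt (f t)) h = cfc f h := by
    have h1 : IsSelfAdjoint (cfc (fun t : ℝ => Real.sqrt (f t)) h) := cfc_predicate _ h
    rw [h1.star_eq, ← cfc_mul _ _ h hcs.continuousOn hcs.continuousOn]
    exact cfc_congr fun x hx => Real.mul_self_sqrt (hf0 x hx)
  rw [← hss]
  exact hτ.2.1 _

lemma ts_algebraMap {τ : WeakDual ℂ A} (hτ1 : τ 1 = 1) (r : ℝ) :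
    τ (algebraMap ℝ A r) = (r : ℂ) := by
  have h1 : algebraMap ℝ A r = (r : ℂ) • (1 : A) := by
    rw [IsScalarTower.algebraMap_apply ℝ ℂ A, Algebra.algebraMap_eq_smul_one]
    norm_num
  rw [h1, _root_.map_smul, hτ1]
  simp

/-- For a selfadjoint `h` and `f` continuous with `0 ≤ f ≤ ‖h‖` on the spectrum,
`τ (cfc f h)` is a real number in `[0, ‖h‖]`. -/
lemma ts_cfc_bounds {τ : WeakDual ℂ A} (hτ : τ ∈ TS A) {h : A} (hh : IsSelfAdjoint h)
    {f : ℝ → ℝ} (hf : Continuous f) (hf0 : ∀ x ∈ spectrum ℝ h, 0 ≤ f x)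
    (hf1 : ∀ x ∈ spectrum ℝ h, f x ≤ ‖h‖) :
    (τ (cfc f h)).im = 0 ∧ 0 ≤ (τ (cfc f h)).re ∧ (τ (cfc f h)).re ≤ ‖h‖ := by
  have h1 := ts_cfc_nonneg hτ hh hf hf0
  have h2 : 0 ≤ τ (cfc (fun t => ‖h‖ - f t) h) :=
    ts_cfc_nonneg hτ hh (continuous_const.sub hf) fun x hx => sub_nonneg.2 (hf1 x hx)
  have h3 : cfc (fun t : ℝ => ‖h‖ - f t) h = algebraMap ℝ A ‖h‖ - cfc f h := by
    rw [cfc_sub _ _ h continuous_const.continuousOn hf.continuousOn, cfc_const _ _ hh]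
  rw [h3, map_sub, ts_algebraMap hτ.1] at h2
  have h1' := Complex.le_def.1 h1
  have h2' := Complex.le_def.1 h2
  simp only [Complex.zero_re, Complex.zero_im, Complex.sub_re, Complex.sub_im,
    Complex.ofReal_re, Complex.ofReal_im] at h1' h2'
  refine ⟨h1'.2.symm, h1'.1, by linarith [h2'.1]⟩

lemma ts_selfAdjoint_bound {τ : WeakDual ℂ A} (hτ : τ ∈ TS A) {h : A}
    (hh : IsSelfAdjoint h) : ‖τ h‖ ≤ ‖h‖ := by
  have hnt : Nontrivial A := by
    refine nontrivial_of_ne 1 0 fun h10 => ?_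
    have h11 := hτ.1
    rw [h10, map_zero] at h11
    exact one_ne_zero h11.symm
  have hcp : Continuous fun t : ℝ => max t 0 := continuous_id.max continuous_const
  have hcq : Continuous fun t : ℝ => max (-t) 0 := continuous_neg.max continuous_const
  have hsb : ∀ x ∈ spectrum ℝ h, |x| ≤ ‖h‖ := fun x hx => by
    have := spectrum.norm_le_norm_of_mem hx
    rwa [Real.norm_eq_abs] at this
  have hbp := ts_cfc_bounds hτ hh hcp (fun x _ => le_max_right _ _)
    (fun x hx => max_le ((le_abs_self x).trans (hsb x hx)) (norm_nonneg h))
  have hbq := ts_cfc_bounds hτ hh hcq (fun x _ => le_max_right _ _)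
    (fun x hx => max_le ((neg_le_abs x).trans (hsb x hx)) (norm_nonneg h))
  have hpq : cfc (fun t : ℝ => max t 0) h - cfc (fun t : ℝ => max (-t) 0) h = h := by
    rw [← cfc_sub _ _ h hcp.continuousOn hcq.continuousOn]
    rw [cfc_congr (g := fun t : ℝ => t) (fun x _ => by
      rcases le_total 0 x with hx | hx
      · simp [max_eq_left hx, max_eq_right (neg_nonpos.2 hx)]
      · simp [max_eq_right hx, max_eq_left (neg_nonneg.2 hx)])]
    exact cfc_id' ℝ h
  have hth : τ h = τ (cfc (fun t : ℝ => max t 0) h) - τ (cfc (fun t : ℝ => max (-t) 0) h) := by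
    rw [← map_sub, hpq]
  have him : (τ h).im = 0 := by rw [hth, Complex.sub_im, hbp.1, hbq.1]; ring
  have hre : |(τ h).re| ≤ ‖h‖ := by
    rw [hth, Complex.sub_re, abs_le]
    constructor
    · linarith [hbp.2.1, hbq.2.2]
    · linarith [hbp.2.2, hbq.2.1]
  have hzr : τ h = ((τ h).re : ℂ) := Complex.ext rfl (by simp [him])
  rw [hzr, Complex.norm_real, Real.norm_eq_abs]
  exact hre

lemma ts_norm_bound {τ : WeakDual ℂ A} (hτ : τ ∈ TS A) (x : A) : ‖τ x‖ ≤ 2 * ‖x‖ := by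
  have hsh : IsSelfAdjoint ((2⁻¹ : ℂ) • (x + star x)) := by
    rw [IsSelfAdjoint, star_smul, star_add, star_star]
    simp [add_comm]
  have hsw : IsSelfAdjoint ((-(2⁻¹) * Complex.I : ℂ) • (x - star x)) := by
    rw [IsSelfAdjoint, star_smul, star_sub, star_star]
    have h1 : star (-(2⁻¹) * Complex.I : ℂ) = 2⁻¹ * Complex.I := by
      simp [Complex.ext_iff]
    rw [h1, ← neg_sub x (star x), smul_neg, ← neg_smul]
    congr 1
    ring
  have hx : (2⁻¹ : ℂ) • (x + star x) + Complex.I • ((-(2⁻¹) * Complex.I : ℂ) • (x - star x))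
      = x := by
    rw [smul_smul]
    have : Complex.I * (-(2⁻¹) * Complex.I) = 2⁻¹ := by
      rw [mul_comm, mul_assoc, Complex.I_mul_I]; ring
    rw [this]
    module
  have hnh : ‖(2⁻¹ : ℂ) • (x + star x)‖ ≤ ‖x‖ := by
    rw [norm_smul]
    have h2 : ‖(2⁻¹ : ℂ)‖ = 2⁻¹ := by norm_num
    rw [h2]
    calc 2⁻¹ * ‖x + star x‖ ≤ 2⁻¹ * (‖x‖ + ‖star x‖) := by
          gcongr; exact norm_add_le _ _
    _ = ‖x‖ := by rw [norm_star]; ring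
  have hnw : ‖(-(2⁻¹) * Complex.I : ℂ) • (x - star x)‖ ≤ ‖x‖ := by
    rw [norm_smul]
    have h2 : ‖(-(2⁻¹) * Complex.I : ℂ)‖ = 2⁻¹ := by
      rw [norm_mul, Complex.norm_I, norm_neg]
      norm_num
    rw [h2]
    calc 2⁻¹ * ‖x - star x‖ ≤ 2⁻¹ * (‖x‖ + ‖star x‖) := by
          gcongr; exact norm_sub_le _ _
    _ = ‖x‖ := by rw [norm_star]; ring
  have htx : τ x = τ ((2⁻¹ : ℂ) • (x + star x))
      + Complex.I * τ ((-(2⁻¹) * Complex.I : ℂ) • (x - star x)) := by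
    conv_lhs => rw [← hx]
    rw [map_add]; congr 1; exact map_smul τ Complex.I _
  calc ‖τ x‖ ≤ ‖τ ((2⁻¹ : ℂ) • (x + star x))‖
      + ‖Complex.I * τ ((-(2⁻¹) * Complex.I : ℂ) • (x - star x))‖ := by
        rw [htx]; exact norm_add_le _ _
  _ = ‖τ ((2⁻¹ : ℂ) • (x + star x))‖ + ‖τ ((-(2⁻¹) * Complex.I : ℂ) • (x - star x))‖ := by
        rw [norm_mul, Complex.norm_I, one_mul]
  _ ≤ ‖(2⁻¹ : ℂ) • (x + star x)‖ + ‖(-(2⁻¹) * Complex.I : ℂ) • (x - star x)‖ :=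
        add_le_add (ts_selfAdjoint_bound hτ hsh) (ts_selfAdjoint_bound hτ hsw)
  _ ≤ ‖x‖ + ‖x‖ := add_le_add hnh hnw
  _ = 2 * ‖x‖ := by ring

lemma isClosed_nonneg_complex : IsClosed {z : ℂ | 0 ≤ z} := by
  have : {z : ℂ | 0 ≤ z} = Complex.re ⁻¹' (Set.Ici 0) ∩ Complex.im ⁻¹' {0} := by
    ext z
    simp only [Set.mem_setOf_eq, Set.mem_inter_iff, Set.mem_preimage, Set.mem_Ici,
      Set.mem_singleton_iff, Complex.le_def, Complex.zero_re, Complex.zero_im]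
    tauto
  rw [this]
  exact (isClosed_Ici.preimage Complex.continuous_re).inter
    (isClosed_singleton.preimage Complex.continuous_im)

lemma isClosed_TS : IsClosed (TS A) := by
  have h1 : IsClosed {τ : WeakDual ℂ A | τ 1 = 1} :=
    isClosed_eq (WeakDual.eval_continuous 1) continuous_const
  have h2 : IsClosed {τ : WeakDual ℂ A | ∀ x : A, 0 ≤ τ (star x * x)} := by
    rw [Set.setOf_forall]
    exact isClosed_iInter fun x =>
      isClosed_nonneg_complex.preimage (WeakDual.eval_continuous _)
  have h3 : IsClosed {τ : WeakDual ℂ A | ∀ x y : A, τ (x * y) = τ (y * x)} := by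
    rw [Set.setOf_forall]
    refine isClosed_iInter fun x => ?_
    rw [Set.setOf_forall]
    exact isClosed_iInter fun y =>
      isClosed_eq (WeakDual.eval_continuous _) (WeakDual.eval_continuous _)
  have : TS A = {τ : WeakDual ℂ A | τ 1 = 1} ∩
      ({τ : WeakDual ℂ A | ∀ x : A, 0 ≤ τ (star x * x)} ∩
        {τ : WeakDual ℂ A | ∀ x y : A, τ (x * y) = τ (y * x)}) := by
    ext τ
    simp only [TS, IsTracialState, Set.mem_setOf_eq, Set.mem_inter_iff]
  rw [this]
  exact h1.inter (h2.inter h3)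

lemma isCompact_TS : IsCompact (TS A) := by
  refine WeakDual.isCompact_of_bounded_of_closed ?_ isClosed_TS
  refine (@isBounded_iff_forall_norm_le (StrongDual ℂ A) _ (TS A)).2 ?_
  refine ⟨2, fun τ' hτ' => ?_⟩
  exact ContinuousLinearMap.opNorm_le_bound _ (by norm_num) fun x => ts_norm_bound hτ' x

end Lemmas2
section Lemmas3

/-- `f_{1/(n+1)}`. -/
noncomputable def gFun (n : ℕ) : ℝ → ℝ := fun t => min (((n : ℝ) + 1) * t) 1

/-- `f_{1/(m+1)} ∘ (· - ε)₊`. -/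
noncomputable def hFun (ε : ℝ) (m : ℕ) : ℝ → ℝ :=
  fun t => min (((m : ℝ) + 1) * max (t - ε) 0) 1

lemma gFun_continuous (n : ℕ) : Continuous (gFun n) :=
  (continuous_const.mul continuous_id).min continuous_const

lemma hFun_continuous (ε : ℝ) (m : ℕ) : Continuous (hFun ε m) :=
  (continuous_const.mul ((continuous_id.sub continuous_const).max continuous_const)).min
    continuous_const

lemma fEps_continuous (ε : ℝ) : Continuous fun t : ℝ => min (t / ε) 1 :=
  (continuous_id.div_const ε).min continuous_const

lemma gFun_le_one (n : ℕ) (t : ℝ) : gFun n t ≤ 1 := min_le_right _ _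

lemma hFun_le_one (ε : ℝ) (m : ℕ) (t : ℝ) : hFun ε m t ≤ 1 := min_le_right _ _

lemma hFun_nonneg (ε : ℝ) (m : ℕ) (t : ℝ) : 0 ≤ hFun ε m t :=
  le_min (mul_nonneg (by positivity) (le_max_right _ _)) zero_le_one

lemma key1 {ε x : ℝ} (hε : 0 < ε) (hx : 0 ≤ x) (m : ℕ) :
    hFun ε m x ≤ min (x / ε) 1 := by
  rcases le_or_gt x ε with h | h
  · have h0 : max (x - ε) 0 = 0 := max_eq_right (by linarith)
    rw [hFun, h0, mul_zero, min_eq_left zero_le_one]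
    exact le_min (div_nonneg hx hε.le) zero_le_one
  · have h1 : (1 : ℝ) ≤ x / ε := (one_le_div hε).2 h.le
    rw [min_eq_right h1]
    exact hFun_le_one ε m x
lemma key2 {ε x : ℝ} (hε : 0 < ε) (hx : 0 ≤ x) {M : ℕ} (hM : 1 / ε ≤ (M : ℝ) + 1) :
    min (x / ε) 1 ≤ gFun M x := by
  refine min_le_min ?_ le_rfl
  have h2 : x / ε ≤ ((M : ℝ) + 1) * x := by
    rw [div_eq_mul_one_div, mul_comm]
    exact mul_le_mul_of_nonneg_right hM hx
  exact h2

lemma key3 {ε x : ℝ} (hε : 0 < ε) (hx : 0 ≤ x) (n : ℕ) :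
    gFun n x ≤ hFun ε (2 * n + 1) x + 2 * ε * ((n : ℝ) + 1) := by
  have hcast : ((2 * n + 1 : ℕ) : ℝ) + 1 = 2 * ((n : ℝ) + 1) := by push_cast; ring
  rcases le_or_gt x (2 * ε) with h | h
  · have h1 : gFun n x ≤ ((n : ℝ) + 1) * x := min_le_left _ _
    have h2 : ((n : ℝ) + 1) * x ≤ 2 * ε * ((n : ℝ) + 1) := by nlinarith [(Nat.cast_nonneg n : (0:ℝ) ≤ n)]
    have h3 : 0 ≤ hFun ε (2 * n + 1) x := hFun_nonneg _ _ _
    linarith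
  · have h0 : max (x - ε) 0 = x - ε := max_eq_left (by linarith)
    have h1 : gFun n x ≤ hFun ε (2 * n + 1) x := by
      rw [gFun, hFun, h0, hcast]
      refine min_le_min ?_ le_rfl
      nlinarith [(Nat.cast_nonneg n : (0:ℝ) ≤ n)]
    have h2 : 0 ≤ 2 * ε * ((n : ℝ) + 1) := by positivity
    linarith

variable {A : Type u} [CStarAlgebra A] {k : ℕ} {B : Type v} [CStarAlgebra B]
  [PartialOrder B] [StarOrderedRing B] (e : Mat k A ≃⋆ₐ[ℂ] B)

lemma dRank_eq (φ : B → ℂ) (b : B) :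
    dRank φ b = ⨆ n : ℕ, (φ (cfc (gFun n) b)).re := rfl

lemma dRank_cutMinus_eq (φ : B → ℂ) {b : B} (hb : IsSelfAdjoint b) (ε : ℝ) :
    dRank φ (cutMinus b ε) = ⨆ m : ℕ, (φ (cfc (hFun ε m) b)).re := by
  rw [dRank_eq]
  refine iSup_congr fun m => ?_
  congr 1
  rw [show cutMinus b ε = cfc (fun t : ℝ => max (t - ε) 0) b from rfl,
    ← cfc_comp' (gFun m) (fun t : ℝ => max (t - ε) 0) b
      (gFun_continuous m).continuousOn
      ((continuous_id.sub continuous_const).max continuous_const).continuousOn hb]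
  rfl

lemma matTr_cfc_le_k {τ : WeakDual ℂ A} (hτ : τ ∈ TS A) {f : ℝ → ℝ} {a : B}
    (hsa : IsSelfAdjoint a) (hf : Continuous f) (h1 : ∀ x ∈ spectrum ℝ a, f x ≤ 1) :
    (matTr τ e (cfc f a)).re ≤ k := by
  have hle : cfc f a ≤ algebraMap ℝ B 1 := cfc_le_algebraMap f 1 a h1 hf.continuousOn hsa
  have h2 := matTr_mono e hτ hle
  rw [matTr_algebraMap e hτ.1 1] at h2
  simpa using h2

lemma bdd_matTr {τ : WeakDual ℂ A} (hτ : τ ∈ TS A) {fs : ℕ → ℝ → ℝ} {a : B}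
    (hsa : IsSelfAdjoint a) (hc : ∀ n, Continuous (fs n))
    (h1 : ∀ n, ∀ x ∈ spectrum ℝ a, fs n x ≤ 1) :
    BddAbove (Set.range fun n => (matTr τ e (cfc (fs n) a)).re) := by
  refine ⟨k, ?_⟩
  rintro r ⟨n, rfl⟩
  exact matTr_cfc_le_k e hτ hsa (hc n) (h1 n)

end Lemmas3
theorem stmt_0 {A : Type u} [CStarAlgebra A] (hTA : (TS A).Nonempty)
    {k : ℕ} {B : Type v} [CStarAlgebra B] [PartialOrder B] [StarOrderedRing B]
    (e : Mat k A ≃⋆ₐ[ℂ] B) (a : B) (ha : 0 ≤ a)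
    {α β : ℝ} (hα : 0 < α) (hαβ : α < β)
    {Y : Set (WeakDual ℂ A)} (hYT : Y ⊆ TS A) (hYc : IsClosed Y)
    (hd : ∀ τ ∈ Y, α < dRank (matTr τ e) a ∧ dRank (matTr τ e) a < β) :
    ∃ ε : ℝ, 0 < ε ∧ ∃ U : Set (WeakDual ℂ A), IsOpen U ∧ Y ⊆ U ∧
      ∀ τ ∈ U ∩ TS A, α < dRank (matTr τ e) (cutMinus a ε) ∧
        dRank (matTr τ e) (cutMinus a ε) < β := by
  classical
  rcases Y.eq_empty_or_nonempty with hYe | hYne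
  · exact ⟨1, one_pos, ∅, isOpen_empty, by simp [hYe], by simp⟩
  have hsa : IsSelfAdjoint a := IsSelfAdjoint.of_nonneg ha
  have hsp : ∀ x ∈ spectrum ℝ a, (0 : ℝ) ≤ x := spectrum_nonneg_of_nonneg ha
  have hFcont : ∀ b : B, Continuous fun σ : WeakDual ℂ A => (matTr σ e b).re :=
    fun b => matTr_continuous (e.symm b)
  -- select indices and gaps on Y
  have hsel : ∀ τ ∈ Y, ∃ (n : ℕ) (δ : ℝ), 0 < δ ∧
      α + δ < (matTr τ e (cfc (gFun n) a)).re := by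
    intro τ hτ
    have h1 := (hd τ hτ).1
    rw [dRank_eq] at h1
    obtain ⟨n, hn⟩ := exists_lt_of_lt_ciSup h1
    exact ⟨n, ((matTr τ e (cfc (gFun n) a)).re - α) / 2, by linarith, by linarith⟩
  choose nn δδ hδpos hδlt using hsel
  have hYcpt : IsCompact Y := isCompact_TS.of_isClosed_subset hYc hYT
  set V : Y → Set (WeakDual ℂ A) := fun t =>
    {σ | α + δδ t t.2 < (matTr σ e (cfc (gFun (nn t t.2)) a)).re} with hV
  have hVo : ∀ t : Y, IsOpen (V t) := fun t => isOpen_lt continuous_const (hFcont _)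
  have hcov : Y ⊆ ⋃ t : Y, V t := fun σ hσ => Set.mem_iUnion.2 ⟨⟨σ, hσ⟩, hδlt σ hσ⟩
  obtain ⟨s, hscov⟩ := hYcpt.elim_finite_subcover V hVo hcov
  have hsne : s.Nonempty := by
    obtain ⟨τ0, hτ0⟩ := hYne
    have h1 := hscov hτ0
    rw [Set.mem_iUnion₂] at h1
    obtain ⟨t, hts, -⟩ := h1
    exact ⟨t, hts⟩
  set N : ℕ := s.sup' hsne (fun t : ↥Y => nn t.1 t.2) with hN
  set δm : ℝ := s.inf' hsne (fun t : ↥Y => δδ t.1 t.2) with hδm'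
  have hδm : 0 < δm := (Finset.lt_inf'_iff hsne).2 fun t ht => hδpos t t.2
  set D : ℝ := 2 * ((N : ℝ) + 1) * ((k : ℝ) + 1) with hD
  have hD0 : 0 < D := by positivity
  set ε : ℝ := δm / D with hε'
  have hε : 0 < ε := div_pos hδm hD0
  refine ⟨ε, hε, ?_⟩
  set fe : B := cfc (fun t : ℝ => min (t / ε) 1) a with hfe
  set M : ℕ := ⌈1 / ε⌉₊ with hM
  have hMε : 1 / ε ≤ (M : ℝ) + 1 := le_trans (Nat.le_ceil _) (by linarith)
  have hGY : ∀ τ ∈ Y, (matTr τ e fe).re < β := by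
    intro τ hτ
    have h1 : fe ≤ cfc (gFun M) a := by
      rw [hfe]
      exact cfc_mono (fun x hx => key2 hε (hsp x hx) hMε)
        (fEps_continuous ε).continuousOn (gFun_continuous M).continuousOn
    have h2 := matTr_mono e (hYT hτ) h1
    have h3 : (matTr τ e (cfc (gFun M) a)).re ≤ dRank (matTr τ e) a := by
      rw [dRank_eq]
      exact le_ciSup
        (bdd_matTr e (hYT hτ) hsa gFun_continuous (fun n x _ => gFun_le_one n x)) M
    exact lt_of_le_of_lt (h2.trans h3) (hd τ hτ).2
  refine ⟨{σ | (matTr σ e fe).re < β} ∩ ⋃ t ∈ s, V t, ?_, ?_, ?_⟩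
  · exact (isOpen_lt (hFcont fe) continuous_const).inter
      (isOpen_biUnion fun t _ => hVo t)
  · exact Set.subset_inter (fun τ hτ => hGY τ hτ) hscov
  · rintro τ ⟨⟨hτW, hτV⟩, hτT⟩
    simp only [Set.mem_setOf_eq] at hτW
    constructor
    · -- lower bound
      rw [Set.mem_iUnion₂] at hτV
      obtain ⟨t, hts, hτt⟩ := hτV
      simp only [hV, Set.mem_setOf_eq] at hτt
      set n : ℕ := nn t t.2 with hn
      have hround : cfc (fun x : ℝ => hFun ε (2 * n + 1) x + 2 * ε * ((n : ℝ) + 1)) a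
          = cfc (hFun ε (2 * n + 1)) a + algebraMap ℝ B (2 * ε * ((n : ℝ) + 1)) := by
        rw [cfc_add a _ _ (hFun_continuous ε _).continuousOn continuous_const.continuousOn,
          cfc_const _ _ hsa]
      have h1 : cfc (gFun n) a ≤ cfc (hFun ε (2 * n + 1)) a
          + algebraMap ℝ B (2 * ε * ((n : ℝ) + 1)) := by
        rw [← hround]
        exact cfc_mono (fun x hx => key3 hε (hsp x hx) n) (gFun_continuous n).continuousOn
          ((hFun_continuous ε _).add continuous_const).continuousOn
      have h2 := matTr_mono e hτT h1
      rw [matTr_add, Complex.add_re, matTr_algebraMap e hτT.1] at h2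
      have hkr : (((k : ℕ) : ℂ) * ((2 * ε * ((n : ℝ) + 1) : ℝ) : ℂ)).re
          = (k : ℝ) * (2 * ε * ((n : ℝ) + 1)) := by
        simp [Complex.mul_re]
      rw [hkr] at h2
      have h3 : (matTr τ e (cfc (hFun ε (2 * n + 1)) a)).re
          ≤ dRank (matTr τ e) (cutMinus a ε) := by
        rw [dRank_cutMinus_eq _ hsa]
        exact le_ciSup (bdd_matTr e hτT hsa (hFun_continuous ε)
          (fun m x _ => hFun_le_one ε m x)) (2 * n + 1)
      have hnN : (n : ℝ) ≤ (N : ℝ) := by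
        exact_mod_cast Finset.le_sup' (fun t : ↥Y => nn t.1 t.2) hts
      have hδt : δm ≤ δδ t t.2 := Finset.inf'_le _ hts
      have hb : (k : ℝ) * (2 * ε * ((n : ℝ) + 1)) ≤ δm := by
        have h4 : 2 * ((n : ℝ) + 1) * (k : ℝ) ≤ D := by
          rw [hD]
          have hk0 : (0 : ℝ) ≤ (k : ℝ) := Nat.cast_nonneg k
          nlinarith
        have h5 : (k : ℝ) * (2 * ε * ((n : ℝ) + 1)) = ε * (2 * ((n : ℝ) + 1) * (k : ℝ)) := by
          ring
        rw [h5, hε']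
        calc δm / D * (2 * ((n : ℝ) + 1) * (k : ℝ)) ≤ δm / D * D :=
              mul_le_mul_of_nonneg_left h4 (div_pos hδm hD0).le
        _ = δm := div_mul_cancel₀ _ (ne_of_gt hD0)
      linarith
    · -- upper bound
      rw [dRank_cutMinus_eq _ hsa]
      refine lt_of_le_of_lt (ciSup_le fun m => ?_) hτW
      have h1 : cfc (hFun ε m) a ≤ fe := by
        rw [hfe]
        exact cfc_mono (fun x hx => key1 hε (hsp x hx) m)
          (hFun_continuous ε m).continuousOn (fEps_continuous ε).continuousOn
      exact matTr_mono e hτT h1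

end
end

section
/- Let A be a unital separable C*-algebra with T(A) ≠ ∅, and let Y ⊂ T(A) be closed. Suppose a ∈ M_k(A) is a positive element such that β − α < d_τ(a) ≤ β for all τ ∈ Y, for some real numbers 0 < α < β. Then there exists η > 0 such that k − β ≤ d_τ(1_k − f_η(a)) < k − β + 2α for all τ ∈ Y. -/
open Filter Set Topology MeasureTheory
open scoped ComplexOrder Matrix.Norms.L2Operator

noncomputable section

universe u v

section AuxStmt1

open scoped ComplexOrder

/-! ### Pointwise inequalities -/

private lemma aux_ineqI {c x m : ℝ} (hc : 0 < c) (hx : 0 ≤ x) (hm : 0 ≤ m) :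
    min (m * (1 - min ((2*c)*x) 1)) 1
      ≤ 1 - (min (c*x) 1 + min (c*x) 1 - min ((2*c)*x) 1) := by
  rcases le_or_gt 1 ((2*c)*x) with h | h
  · rw [min_eq_right h]
    have h1 : min (c*x) 1 ≤ 1 := min_le_right _ _
    norm_num
    linarith
  · have h1 : c*x ≤ (2*c)*x := by nlinarith
    rw [min_eq_left h.le, min_eq_left (h1.trans h.le)]
    have h2 : min (m * (1 - (2*c)*x)) 1 ≤ 1 := min_le_right _ _
    linarith

private lemma aux_ineqII {c x : ℝ} (hc : 0 < c) (hx : 0 ≤ x) :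
    1 - min ((4*c)*x) 1 ≤ min (2 * (1 - min ((2*c)*x) 1)) 1 := by
  rcases le_or_gt 1 ((4*c)*x) with h | h
  · rw [min_eq_right h]
    have h1 : min ((2*c)*x) 1 ≤ 1 := min_le_right _ _
    have h2 : (0:ℝ) ≤ min (2 * (1 - min ((2*c)*x) 1)) 1 := le_min (by linarith) zero_le_one
    linarith
  · have h2 : (2*c)*x ≤ 1 := by nlinarith
    rw [min_eq_left h2, min_eq_right (show (1:ℝ) ≤ 2 * (1 - (2*c)*x) by nlinarith)]
    have h3 : (0:ℝ) ≤ min ((4*c)*x) 1 := le_min (by positivity) zero_le_one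
    linarith

/-! ### Norm bounds for tracial states -/

variable {A : Type u} [CStarAlgebra A]

private lemma aux_ts_le_norm {τ : WeakDual ℂ A} (hτ : IsTracialState A τ) {y : A}
    (hy : IsSelfAdjoint y) : τ y ≤ (‖y‖ : ℂ) := by
  have hnt : Nontrivial A := by
    by_contra h
    rw [not_nontrivial_iff_subsingleton] at h
    have h10 : (1 : A) = 0 := Subsingleton.elim _ _
    have h1 : (1 : ℂ) = 0 := by rw [← hτ.1, h10, map_zero]
    exact one_ne_zero h1
  set c : A := cfc (fun t : ℝ => Real.sqrt (‖y‖ - t)) y with hc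
  have hcsa : IsSelfAdjoint c := cfc_predicate _ y
  have hcc : star c * c = algebraMap ℝ A ‖y‖ - y := by
    rw [hcsa.star_eq, hc, ← cfc_mul _ _ y]
    have heq : cfc (fun t : ℝ => Real.sqrt (‖y‖ - t) * Real.sqrt (‖y‖ - t)) y
        = cfc (fun t : ℝ => ‖y‖ - t) y := by
      refine cfc_congr fun x hx => ?_
      have hxy : ‖x‖ ≤ ‖y‖ := spectrum.norm_le_norm_of_mem hx
      have hx' : x ≤ ‖y‖ := (le_abs_self x).trans (by rwa [← Real.norm_eq_abs])
      exact Real.mul_self_sqrt (by linarith)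
    rw [heq, cfc_sub _ _ y, cfc_const _ y, cfc_id' ℝ y]
  have h0 : 0 ≤ τ (algebraMap ℝ A ‖y‖ - y) := by rw [← hcc]; exact hτ.2.1 c
  have halg : τ (algebraMap ℝ A ‖y‖) = (‖y‖ : ℂ) := by
    rw [IsScalarTower.algebraMap_apply ℝ ℂ A, Algebra.algebraMap_eq_smul_one, _root_.map_smul, hτ.1,
      smul_eq_mul, mul_one, Complex.coe_algebraMap]
  rw [map_sub, halg] at h0
  exact sub_nonneg.mp h0

private lemma aux_ts_norm_sa {τ : WeakDual ℂ A} (hτ : IsTracialState A τ) {y : A}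
    (hy : IsSelfAdjoint y) : ‖τ y‖ ≤ ‖y‖ := by
  have h1 := aux_ts_le_norm hτ hy
  have h2 := aux_ts_le_norm hτ hy.neg
  rw [map_neg, norm_neg] at h2
  rw [Complex.le_def] at h1 h2
  have him : (τ y).im = 0 := by
    have := h1.2; simpa using this
  have hre : |(τ y).re| ≤ ‖y‖ := by
    rw [abs_le]
    constructor
    · have := h2.1; simp only [Complex.neg_re, Complex.ofReal_re] at this ⊢; linarith
    · simpa using h1.1
  calc ‖τ y‖ = ‖((τ y).re : ℂ)‖ := by
        congr 1
        exact Complex.ext (by simp) (by simp [him])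
    _ = |(τ y).re| := by rw [Complex.norm_real, Real.norm_eq_abs]
    _ ≤ ‖y‖ := hre

private lemma aux_ts_norm_bound {τ : WeakDual ℂ A} (hτ : IsTracialState A τ) (x : A) :
    ‖τ x‖ ≤ 2 * ‖x‖ := by
  set x₁ : A := (2 : ℂ)⁻¹ • (x + star x) with hx₁
  set x₂ : A := (2 * Complex.I)⁻¹ • (x - star x) with hx₂
  have hd : x = x₁ + Complex.I • x₂ := by
    rw [hx₁, hx₂, smul_smul]
    rw [show Complex.I * (2 * Complex.I)⁻¹ = (2 : ℂ)⁻¹ by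
      field_simp [Complex.I_ne_zero]]
    rw [← smul_add]
    module
  have h₁sa : IsSelfAdjoint x₁ := by
    rw [hx₁, IsSelfAdjoint, star_smul, star_add, star_star, star_inv₀, add_comm]
    norm_num
  have h₂sa : IsSelfAdjoint x₂ := by
    rw [hx₂, IsSelfAdjoint, star_smul, star_sub, star_star]
    rw [show star ((2 * Complex.I)⁻¹) = -(2 * Complex.I)⁻¹ by
      simp [star_inv₀, Complex.star_def, Complex.conj_I, mul_comm]]
    module
  have hn₁ : ‖x₁‖ ≤ ‖x‖ := by
    rw [hx₁]
    calc ‖(2:ℂ)⁻¹ • (x + star x)‖ = ‖(2:ℂ)⁻¹‖ * ‖x + star x‖ := norm_smul _ _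
      _ ≤ (2⁻¹ : ℝ) * (‖x‖ + ‖star x‖) := by
          gcongr
          · norm_num
          · exact norm_add_le _ _
      _ = ‖x‖ := by rw [norm_star]; ring
  have hn₂ : ‖x₂‖ ≤ ‖x‖ := by
    rw [hx₂]
    calc ‖(2 * Complex.I)⁻¹ • (x - star x)‖ = ‖(2 * Complex.I)⁻¹‖ * ‖x - star x‖ :=
          norm_smul _ _
      _ ≤ (2⁻¹ : ℝ) * (‖x‖ + ‖star x‖) := by
          gcongr
          · simp [norm_inv, Complex.norm_I]
          · exact norm_sub_le _ _
      _ = ‖x‖ := by rw [norm_star]; ring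
  have hIs : τ (Complex.I • x₂) = Complex.I * τ x₂ := by rw [_root_.map_smul, smul_eq_mul]
  calc ‖τ x‖ = ‖τ x₁ + Complex.I * τ x₂‖ := by
        rw [hd, map_add, hIs]
    _ ≤ ‖τ x₁‖ + ‖Complex.I * τ x₂‖ := norm_add_le _ _
    _ ≤ ‖x₁‖ + ‖τ x₂‖ := by
        rw [norm_mul, Complex.norm_I, one_mul]
        gcongr
        exact aux_ts_norm_sa hτ h₁sa
    _ ≤ ‖x‖ + ‖x‖ := add_le_add hn₁ (le_trans (aux_ts_norm_sa hτ h₂sa) hn₂)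
    _ = 2 * ‖x‖ := by ring

/-! ### The transported trace -/

variable {k : ℕ} {B : Type v} [CStarAlgebra B] [PartialOrder B] [StarOrderedRing B]
  (e : Mat k A ≃⋆ₐ[ℂ] B) (τ : WeakDual ℂ A)

set_option linter.unusedSectionVars false

private lemma aux_matTr_add (b c : B) : matTr τ e (b + c) = matTr τ e b + matTr τ e c := by
  simp [matTr, map_add, Matrix.add_apply, Finset.sum_add_distrib]

private lemma aux_matTr_sub (b c : B) : matTr τ e (b - c) = matTr τ e b - matTr τ e c := by
  simp [matTr, map_sub, Matrix.sub_apply, Finset.sum_sub_distrib]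

private lemma aux_matTr_one (hτ : IsTracialState A τ) : matTr τ e (1 : B) = (k : ℂ) := by
  simp [matTr, Matrix.one_apply, hτ.1]

private lemma aux_matTr_nonneg_re (hτ : IsTracialState A τ) {b : B} (hb : 0 ≤ b) :
    0 ≤ (matTr τ e b).re := by
  obtain ⟨c, hc⟩ : ∃ c : B, b = star c * c :=
    ⟨CFC.sqrt b, by rw [(IsSelfAdjoint.of_nonneg (CFC.sqrt_nonneg (a := b))).star_eq,
      CFC.sqrt_mul_sqrt_self b hb]⟩
  have h0 : 0 ≤ matTr τ e b := by
    rw [hc]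
    show 0 ≤ ∑ i, τ (e.symm (star c * c) i i)
    have hsymm : e.symm (star c * c) = star (e.symm c) * e.symm c := by
      rw [map_mul, map_star]
    rw [hsymm]
    refine Finset.sum_nonneg fun i _ => ?_
    rw [Matrix.mul_apply, map_sum]
    refine Finset.sum_nonneg fun j _ => ?_
    rw [Matrix.star_apply]
    exact hτ.2.1 _
  simpa using (Complex.le_def.mp h0).1

private lemma aux_matTr_mono_re (hτ : IsTracialState A τ) {b c : B} (hbc : b ≤ c) :
    (matTr τ e b).re ≤ (matTr τ e c).re := by
  have h := aux_matTr_nonneg_re e τ hτ (sub_nonneg.mpr hbc)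
  rw [aux_matTr_sub, Complex.sub_re] at h
  linarith

/-! ### Terms of `dRank` -/

private lemma aux_cont_min (c : ℝ) : Continuous (fun t : ℝ => min (c * t) 1) :=
  (continuous_const.mul continuous_id).min continuous_const

private lemma aux_matTr_cfc_le_card (hτ : IsTracialState A τ) {a : B} {f : ℝ → ℝ}
    (hf : Continuous f) (hf1 : ∀ t, f t ≤ 1) : (matTr τ e (cfc f a)).re ≤ k := by
  by_cases ha : IsSelfAdjoint a
  · have h1 : cfc f a ≤ 1 := by
      calc cfc f a ≤ cfc (fun _ : ℝ => (1:ℝ)) a :=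
            cfc_mono (fun x _ => hf1 x) hf.continuousOn continuousOn_const
        _ = 1 := cfc_const_one ℝ a ha
    have := aux_matTr_mono_re e τ hτ h1
    rwa [aux_matTr_one e τ hτ, Complex.natCast_re] at this
  · rw [cfc_apply_of_not_predicate a ha]
    have := aux_matTr_mono_re e τ hτ (zero_le_one (α := B))
    rw [aux_matTr_one e τ hτ, Complex.natCast_re] at this
    simpa using this

private lemma aux_dRank_bdd (hτ : IsTracialState A τ) (a : B) :
    BddAbove (Set.range fun n : ℕ =>
      (matTr τ e (cfc (fun t : ℝ => min (((n : ℝ) + 1) * t) 1) a)).re) := by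
  refine ⟨k, ?_⟩
  rintro x ⟨n, rfl⟩
  exact aux_matTr_cfc_le_card e τ hτ (aux_cont_min _) (fun t => min_le_right _ _)

private lemma aux_term_le_dRank (hτ : IsTracialState A τ) (a : B) (n : ℕ) :
    (matTr τ e (cfc (fun t : ℝ => min (((n : ℝ) + 1) * t) 1) a)).re
      ≤ dRank (matTr τ e) a :=
  le_ciSup (aux_dRank_bdd e τ hτ a) n

private lemma aux_term_mono (hτ : IsTracialState A τ) {a : B} (ha : 0 ≤ a) {n m : ℕ}
    (hnm : n ≤ m) :
    (matTr τ e (cfc (fun t : ℝ => min (((n : ℝ) + 1) * t) 1) a)).re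
      ≤ (matTr τ e (cfc (fun t : ℝ => min (((m : ℝ) + 1) * t) 1) a)).re := by
  refine aux_matTr_mono_re e τ hτ (cfc_mono (fun x hx => ?_) (aux_cont_min _).continuousOn
    (aux_cont_min _).continuousOn)
  have hx0 : 0 ≤ x := spectrum_nonneg_of_nonneg ha hx
  have hmn : ((n:ℝ) + 1) * x ≤ ((m:ℝ) + 1) * x := by
    have : (n:ℝ) ≤ m := Nat.cast_le.mpr hnm
    nlinarith
  exact min_le_min hmn le_rfl

end AuxStmt1

theorem stmt_1 {A : Type u} [CStarAlgebra A] [TopologicalSpace.SeparableSpace A]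
    (hTA : (TS A).Nonempty)
    {Y : Set (WeakDual ℂ A)} (hYT : Y ⊆ TS A) (hYc : IsClosed Y)
    {k : ℕ} {B : Type v} [CStarAlgebra B] [PartialOrder B] [StarOrderedRing B]
    (e : Mat k A ≃⋆ₐ[ℂ] B) (a : B) (ha : 0 ≤ a)
    {α β : ℝ} (hα : 0 < α) (hαβ : α < β)
    (hd : ∀ τ ∈ Y, β - α < dRank (matTr τ e) a ∧ dRank (matTr τ e) a ≤ β) :
    ∃ η : ℝ, 0 < η ∧ ∀ τ ∈ Y,
      (k : ℝ) - β ≤ dRank (matTr τ e) (1 - fEtaCFC η a) ∧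
      dRank (matTr τ e) (1 - fEtaCFC η a) < (k : ℝ) - β + 2 * α := by
  rcases Y.eq_empty_or_nonempty with rfl | hYne
  · exact ⟨1, one_pos, fun τ hτ => absurd hτ (Set.notMem_empty τ)⟩
  have hsa : IsSelfAdjoint a := IsSelfAdjoint.of_nonneg ha
  have hYb : Bornology.IsBounded (StrongDual.toWeakDual ⁻¹' Y) := by
    refine (Metric.isBounded_closedBall (x := (0 : StrongDual ℂ A)) (r := 2)).subset ?_
    intro φ hφ
    rw [Metric.mem_closedBall, dist_zero_right]
    exact ContinuousLinearMap.opNorm_le_bound φ (by norm_num)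
      (fun x => aux_ts_norm_bound (hYT hφ) x)
  have hYcomp : IsCompact Y := WeakDual.isCompact_of_bounded_of_closed hYb hYc
  set U : ℕ → Set (WeakDual ℂ A) := fun n =>
    (fun σ : WeakDual ℂ A =>
      (matTr σ e (cfc (fun t : ℝ => min (((n : ℝ) + 1) * t) 1) a)).re) ⁻¹' Set.Ioi (β - α)
    with hU
  have hUopen : ∀ n, IsOpen (U n) := by
    intro n
    exact isOpen_Ioi.preimage (Complex.continuous_re.comp
      (continuous_finset_sum _ fun i _ => WeakDual.eval_continuous _))
  have hUcover : Y ⊆ ⋃ n, U n := by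
    intro σ hσY
    have h1 : β - α < ⨆ n : ℕ,
        (matTr σ e (cfc (fun t : ℝ => min (((n : ℝ) + 1) * t) 1) a)).re := (hd σ hσY).1
    obtain ⟨n, hn⟩ := exists_lt_of_lt_ciSup h1
    exact Set.mem_iUnion.mpr ⟨n, hn⟩
  obtain ⟨s, hsY⟩ := hYcomp.elim_finite_subcover U hUopen hUcover
  obtain ⟨τ₀, hτ₀⟩ := hYne
  have hsne : s.Nonempty := by
    obtain ⟨n, hns, _⟩ := Set.mem_iUnion₂.mp (hsY hτ₀)
    exact ⟨n, hns⟩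
  set N := s.max' hsne with hNdef
  have hN : ∀ σ ∈ Y, β - α <
      (matTr σ e (cfc (fun t : ℝ => min (((N : ℝ) + 1) * t) 1) a)).re := by
    intro σ hσY
    obtain ⟨n, hns, hn⟩ := Set.mem_iUnion₂.mp (hsY hσY)
    exact lt_of_lt_of_le hn (aux_term_mono e σ (hYT hσY) ha (s.le_max' n hns))
  set c : ℝ := (N : ℝ) + 1 with hcdef
  have hc : 0 < c := by positivity
  refine ⟨1 / (2 * c), by positivity, fun σ hσY => ?_⟩
  have hτ : IsTracialState A σ := hYT hσY
  have hfun2 : (fun t : ℝ => min ((((2*N+1 : ℕ) : ℝ) + 1) * t) 1)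
      = fun t : ℝ => min ((2*c)*t) 1 := by
    funext t; congr 2; rw [hcdef]; push_cast; ring
  have hfun4 : (fun t : ℝ => min ((((4*N+3 : ℕ) : ℝ) + 1) * t) 1)
      = fun t : ℝ => min ((4*c)*t) 1 := by
    funext t; congr 2; rw [hcdef]; push_cast; ring
  have hdiv : (fun t : ℝ => min (t / (1 / (2*c))) 1) = fun t : ℝ => min ((2*c)*t) 1 := by
    funext t; congr 1; field_simp
  have hr1 : β - α < (matTr σ e (cfc (fun t : ℝ => min (c*t) 1) a)).re := hN σ hσY
  have hr2 : (matTr σ e (cfc (fun t : ℝ => min ((2*c)*t) 1) a)).re ≤ β := by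
    have h := (aux_term_le_dRank e σ hτ a (2*N+1)).trans (hd σ hσY).2
    rwa [hfun2] at h
  have hr4 : (matTr σ e (cfc (fun t : ℝ => min ((4*c)*t) 1) a)).re ≤ β := by
    have h := (aux_term_le_dRank e σ hτ a (4*N+3)).trans (hd σ hσY).2
    rwa [hfun4] at h
  have hcont2 : Continuous fun t : ℝ => min ((2*c)*t) 1 := aux_cont_min _
  have hcontg : Continuous fun t : ℝ => 1 - min ((2*c)*t) 1 := continuous_const.sub hcont2
  have hcfc1 : (1 : B) - fEtaCFC (1 / (2*c)) a
      = cfc (fun t : ℝ => 1 - min ((2*c)*t) 1) a := by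
    rw [fEtaCFC, hdiv, cfc_sub (fun _ : ℝ => (1:ℝ)) (fun t : ℝ => min ((2*c)*t) 1) a
      continuousOn_const hcont2.continuousOn, cfc_const_one ℝ a hsa]
  rw [hcfc1]
  have hcomp : ∀ m : ℕ, cfc (fun t : ℝ => min (((m : ℝ) + 1) * t) 1)
        (cfc (fun t : ℝ => 1 - min ((2*c)*t) 1) a)
      = cfc (fun t : ℝ => min (((m : ℝ) + 1) * (1 - min ((2*c)*t) 1)) 1) a := by
    intro m
    exact (cfc_comp' (fun t : ℝ => min (((m : ℝ) + 1) * t) 1)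
      (fun t : ℝ => 1 - min ((2*c)*t) 1) a
      (aux_cont_min _).continuousOn hcontg.continuousOn hsa).symm
  constructor
  · -- lower bound
    have h1 : (matTr σ e (cfc (fun t : ℝ => min ((((1:ℕ) : ℝ) + 1) * t) 1)
          (cfc (fun t : ℝ => 1 - min ((2*c)*t) 1) a))).re
        ≤ dRank (matTr σ e) (cfc (fun t : ℝ => 1 - min ((2*c)*t) 1) a) :=
      aux_term_le_dRank e σ hτ _ 1
    refine le_trans ?_ h1
    rw [hcomp 1]
    have hmono : cfc (fun t : ℝ => 1 - min ((4*c)*t) 1) a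
        ≤ cfc (fun t : ℝ => min ((((1:ℕ):ℝ)+1) * (1 - min ((2*c)*t) 1)) 1) a := by
      refine cfc_mono (fun x hx => ?_)
        (continuous_const.sub (aux_cont_min _)).continuousOn
        (((continuous_const.mul hcontg).min continuous_const)).continuousOn
      have hx0 : 0 ≤ x := spectrum_nonneg_of_nonneg ha hx
      have h2 : (((1:ℕ):ℝ)+1) = 2 := by norm_num
      rw [h2]
      exact aux_ineqII hc hx0
    refine le_trans ?_ (aux_matTr_mono_re e σ hτ hmono)
    have hsplit : cfc (fun t : ℝ => 1 - min ((4*c)*t) 1) a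
        = 1 - cfc (fun t : ℝ => min ((4*c)*t) 1) a := by
      rw [cfc_sub (fun _ : ℝ => (1:ℝ)) (fun t : ℝ => min ((4*c)*t) 1) a
        continuousOn_const (aux_cont_min _).continuousOn, cfc_const_one ℝ a hsa]
    rw [hsplit, aux_matTr_sub, aux_matTr_one e σ hτ, Complex.sub_re, Complex.natCast_re]
    linarith
  · -- upper bound
    have hub : dRank (matTr σ e) (cfc (fun t : ℝ => 1 - min ((2*c)*t) 1) a)
        ≤ (k : ℝ) - ((matTr σ e (cfc (fun t : ℝ => min (c*t) 1) a)).re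
            + (matTr σ e (cfc (fun t : ℝ => min (c*t) 1) a)).re
            - (matTr σ e (cfc (fun t : ℝ => min ((2*c)*t) 1) a)).re) := by
      refine ciSup_le fun m => ?_
      rw [hcomp m]
      have hmono : cfc (fun t : ℝ => min (((m:ℝ)+1) * (1 - min ((2*c)*t) 1)) 1) a
          ≤ cfc (fun t : ℝ => 1 - (min (c*t) 1 + min (c*t) 1 - min ((2*c)*t) 1)) a := by
        refine cfc_mono (fun x hx => ?_)
          (((continuous_const.mul hcontg).min continuous_const)).continuousOn
          (continuous_const.sub (((aux_cont_min c).add (aux_cont_min c)).sub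
            (aux_cont_min _))).continuousOn
        exact aux_ineqI hc (spectrum_nonneg_of_nonneg ha hx) (by positivity)
      refine le_trans (aux_matTr_mono_re e σ hτ hmono) ?_
      have hsplit : cfc (fun t : ℝ => 1 - (min (c*t) 1 + min (c*t) 1 - min ((2*c)*t) 1)) a
          = 1 - (cfc (fun t : ℝ => min (c*t) 1) a + cfc (fun t : ℝ => min (c*t) 1) a
              - cfc (fun t : ℝ => min ((2*c)*t) 1) a) := by
        rw [cfc_sub (fun _ : ℝ => (1:ℝ))
            (fun t : ℝ => min (c*t) 1 + min (c*t) 1 - min ((2*c)*t) 1) a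
            continuousOn_const (((aux_cont_min c).add (aux_cont_min c)).sub
              (aux_cont_min _)).continuousOn,
          cfc_sub (fun t : ℝ => min (c*t) 1 + min (c*t) 1) (fun t : ℝ => min ((2*c)*t) 1) a
            ((aux_cont_min c).add (aux_cont_min c)).continuousOn (aux_cont_min _).continuousOn,
          cfc_add a (fun t : ℝ => min (c*t) 1) (fun t : ℝ => min (c*t) 1)
            (aux_cont_min c).continuousOn (aux_cont_min c).continuousOn,
          cfc_const_one ℝ a hsa]
      rw [hsplit, aux_matTr_sub, aux_matTr_one e σ hτ, Complex.sub_re, Complex.natCast_re,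
        aux_matTr_sub, aux_matTr_add, Complex.sub_re, Complex.add_re]
    refine lt_of_le_of_lt hub ?_
    linarith

end
end

section
/- Let A be a unital C*-algebra, τ a tracial state on A, and let x, y be positive elements of M_k(A) with y ≤ 1_k. Then d_τ(y^{1/2} x y^{1/2}) ≥ d_τ(x) − d_τ(1_k − y), where 1_k denotes the unit of M_k(A). -/
open Filter Set Topology MeasureTheory
open scoped ComplexOrder Matrix.Norms.L2Operator

noncomputable section

universe u v

section Aux

variable {B : Type v} [CStarAlgebra B] [PartialOrder B] [StarOrderedRing B]

private noncomputable def auxFn (n : ℕ) : ℝ → ℝ := fun t : ℝ => min (((n : ℝ) + 1) * t) 1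

private lemma auxFn_cont (n : ℕ) : Continuous (auxFn n) :=
  (continuous_const.mul continuous_id).min continuous_const

private lemma auxFn_nonneg {n : ℕ} {t : ℝ} (ht : 0 ≤ t) : 0 ≤ auxFn n t :=
  le_min (mul_nonneg (by positivity) ht) zero_le_one

private lemma cfc_sqrt_sq (g : ℝ → ℝ) (hg : Continuous g) (a : B) (ha : IsSelfAdjoint a)
    (h0 : ∀ t ∈ spectrum ℝ a, 0 ≤ g t) :
    cfc (fun t : ℝ => Real.sqrt (g t)) a * cfc (fun t : ℝ => Real.sqrt (g t)) a = cfc g a :=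
  calc cfc (fun t : ℝ => Real.sqrt (g t)) a * cfc (fun t : ℝ => Real.sqrt (g t)) a
      = cfc (fun t : ℝ => Real.sqrt (g t) * Real.sqrt (g t)) a :=
        (cfc_mul _ _ a (Real.continuous_sqrt.comp hg).continuousOn
          (Real.continuous_sqrt.comp hg).continuousOn).symm
    _ = cfc g a := cfc_congr fun t ht => Real.mul_self_sqrt (h0 t ht)

private lemma mul_self_sqrtCFC {a : B} (ha : 0 ≤ a) : sqrtCFC a * sqrtCFC a = a :=
  calc sqrtCFC a * sqrtCFC a
      = cfc (fun t : ℝ => t) a :=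
        cfc_sqrt_sq (fun t : ℝ => t) continuous_id a ha.isSelfAdjoint
          (spectrum_nonneg_of_nonneg ha)
    _ = a := cfc_id' ℝ a ha.isSelfAdjoint

/-- A positive tracial real-linear functional. -/
private structure AuxGood (φ : B → ℂ) : Prop where
  add : ∀ a b : B, φ (a + b) = φ a + φ b
  smul : ∀ (r : ℝ) (a : B), φ (r • a) = r • φ a
  pos : ∀ a : B, 0 ≤ a → 0 ≤ (φ a).re
  tr : ∀ a b : B, φ (a * b) = φ (b * a)

namespace AuxGood

variable {φ : B → ℂ}

private lemma mono (hφ : AuxGood φ) {a b : B} (h : a ≤ b) : (φ a).re ≤ (φ b).re := by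
  have hb : b = a + (b - a) := by abel
  have hpos := hφ.pos (b - a) (sub_nonneg.mpr h)
  calc (φ a).re ≤ (φ a).re + (φ (b - a)).re := le_add_of_nonneg_right hpos
    _ = (φ (a + (b - a))).re := by rw [hφ.add, Complex.add_re]
    _ = (φ b).re := by rw [← hb]

private lemma smul_re (hφ : AuxGood φ) (r : ℝ) (a : B) : (φ (r • a)).re = r * (φ a).re := by
  rw [hφ.smul]; simp [Complex.real_smul]

private lemma dRank_eq (a : B) : dRank φ a = ⨆ n : ℕ, (φ (cfc (auxFn n) a)).re := rfl

private lemma term_le_dRank (hφ : AuxGood φ) {a : B} (ha : 0 ≤ a) (n : ℕ) :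
    (φ (cfc (auxFn n) a)).re ≤ dRank φ a := by
  rw [dRank_eq]
  refine le_ciSup (f := fun m : ℕ => (φ (cfc (auxFn m) a)).re) ⟨(φ 1).re, ?_⟩ n
  rintro - ⟨m, rfl⟩
  exact hφ.mono (cfc_le_one _ _ fun t _ => min_le_right _ _)

private lemma L1 (hφ : AuxGood φ) {a p : B} (ha : 0 ≤ a) (hp0 : 0 ≤ p) (hp1 : p ≤ 1)
    {c : ℝ} (hc : 0 ≤ c) (hpa : p ≤ c • a) : (φ p).re ≤ dRank φ a := by
  have hsa : IsSelfAdjoint a := ha.isSelfAdjoint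
  have key : ∀ n : ℕ, (φ p).re ≤ dRank φ a + c * ((φ 1).re / ((n : ℝ) + 1)) := by
    intro n
    have hfc : Continuous (auxFn n) := auxFn_cont n
    have hfc1 : Continuous (fun t : ℝ => 1 - auxFn n t) := continuous_const.sub hfc
    set s := cfc (fun t : ℝ => Real.sqrt (auxFn n t)) a with hs_def
    set u := cfc (fun t : ℝ => Real.sqrt (1 - auxFn n t)) a with hu_def
    set w := sqrtCFC p with hw_def
    have hss : s * s = cfc (auxFn n) a :=
      cfc_sqrt_sq _ hfc a hsa fun t ht => auxFn_nonneg (spectrum_nonneg_of_nonneg ha ht)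
    have huu : u * u = cfc (fun t : ℝ => 1 - auxFn n t) a :=
      cfc_sqrt_sq _ hfc1 a hsa fun t _ => sub_nonneg.mpr (min_le_right _ _)
    have hww : w * w = p := mul_self_sqrtCFC hp0
    have hs0 : (0 : B) ≤ s := cfc_nonneg fun t _ => Real.sqrt_nonneg _
    have hu0 : (0 : B) ≤ u := cfc_nonneg fun t _ => Real.sqrt_nonneg _
    have hone : s * s + u * u = 1 := by
      rw [hss, huu, ← cfc_add a _ _ hfc.continuousOn hfc1.continuousOn]
      calc cfc (fun t : ℝ => auxFn n t + (1 - auxFn n t)) a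
          = cfc (fun _ : ℝ => (1 : ℝ)) a := cfc_congr fun t _ => by ring
        _ = 1 := cfc_const_one ℝ a hsa
    have hdecomp : w * (s * s) * w + w * (u * u) * w = p := by
      have h1 : w * (s * s) * w + w * (u * u) * w = w * (s * s + u * u) * w := by noncomm_ring
      rw [h1, hone, mul_one, hww]
    have hb1 : (φ (w * (s * s) * w)).re ≤ dRank φ a := by
      have e1 : φ (w * (s * s) * w) = φ (s * p * s) := by
        rw [show w * (s * s) * w = (w * s) * (s * w) from by noncomm_ring, hφ.tr,
          show (s * w) * (w * s) = s * (w * w) * s from by noncomm_ring, hww]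
      rw [e1]
      have hle : s * p * s ≤ s * 1 * s := conjugate_le_conjugate_of_nonneg hp1 hs0
      rw [mul_one, hss] at hle
      exact (hφ.mono hle).trans (hφ.term_le_dRank ha n)
    have hb2 : (φ (w * (u * u) * w)).re ≤ c * ((φ 1).re / ((n : ℝ) + 1)) := by
      have e2 : φ (w * (u * u) * w) = φ (u * p * u) := by
        rw [show w * (u * u) * w = (w * u) * (u * w) from by noncomm_ring, hφ.tr,
          show (u * w) * (w * u) = u * (w * w) * u from by noncomm_ring, hww]
      have hle : u * p * u ≤ c • (u * a * u) := by
        calc u * p * u ≤ u * (c • a) * u := conjugate_le_conjugate_of_nonneg hpa hu0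
          _ = c • (u * a * u) := by rw [mul_smul_comm, smul_mul_assoc]
      have h3 : φ (u * a * u) = φ (a * (u * u)) := by
        rw [show u * a * u = u * (a * u) from by rw [mul_assoc], hφ.tr, mul_assoc]
      have h4 : a * (u * u) = cfc (fun t : ℝ => t * (1 - auxFn n t)) a := by
        rw [huu, cfc_mul (fun t : ℝ => t) _ a continuousOn_id hfc1.continuousOn, cfc_id' ℝ a hsa]
      have h5 : cfc (fun t : ℝ => t * (1 - auxFn n t)) a ≤ algebraMap ℝ B (1 / ((n : ℝ) + 1)) := by
        refine cfc_le_algebraMap _ _ _ (fun t ht => ?_) (continuous_id.mul hfc1).continuousOn hsa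
        have ht0 : 0 ≤ t := spectrum_nonneg_of_nonneg ha ht
        have hn : (0 : ℝ) < (n : ℝ) + 1 := by positivity
        simp only [auxFn]
        rcases le_total (((n : ℝ) + 1) * t) 1 with h | h
        · rw [min_eq_left h]
          rw [le_div_iff₀ hn]
          nlinarith [sq_nonneg (((n : ℝ) + 1) * t - 1)]
        · rw [min_eq_right h]
          simp only [sub_self, mul_zero]
          positivity
      have h6 : (φ (a * (u * u))).re ≤ (1 / ((n : ℝ) + 1)) * (φ 1).re := by
        refine (hφ.mono (h4 ▸ h5)).trans_eq ?_
        rw [Algebra.algebraMap_eq_smul_one, hφ.smul_re]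
      calc (φ (w * (u * u) * w)).re = (φ (u * p * u)).re := by rw [e2]
        _ ≤ (φ (c • (u * a * u))).re := hφ.mono hle
        _ = c * (φ (u * a * u)).re := hφ.smul_re c _
        _ = c * (φ (a * (u * u))).re := by rw [h3]
        _ ≤ c * ((1 / ((n : ℝ) + 1)) * (φ 1).re) := mul_le_mul_of_nonneg_left h6 hc
        _ = c * ((φ 1).re / ((n : ℝ) + 1)) := by ring
    calc (φ p).re = (φ (w * (s * s) * w)).re + (φ (w * (u * u) * w)).re := by
          rw [← hdecomp, hφ.add, Complex.add_re]
      _ ≤ dRank φ a + c * ((φ 1).re / ((n : ℝ) + 1)) := add_le_add hb1 hb2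
  have t1 : Tendsto (fun n : ℕ => ((n : ℝ) + 1)) atTop atTop :=
    tendsto_atTop_add_const_right _ 1 tendsto_natCast_atTop_atTop
  have t2 : Tendsto (fun n : ℕ => dRank φ a + c * ((φ 1).re / ((n : ℝ) + 1))) atTop
      (𝓝 (dRank φ a)) := by
    have h0 : Tendsto (fun n : ℕ => c * ((φ 1).re / ((n : ℝ) + 1))) atTop (𝓝 0) := by
      simpa using ((tendsto_const_nhds (x := (φ 1).re)).div_atTop t1).const_mul c
    simpa using (tendsto_const_nhds (x := dRank φ a)).add h0
  exact ge_of_tendsto' t2 key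

private lemma main (hφ : AuxGood φ) {x y : B} (hx : 0 ≤ x) (hy : 0 ≤ y) (hy1 : y ≤ 1) :
    dRank φ x ≤ dRank φ (sqrtCFC y * x * sqrtCFC y) + dRank φ (1 - y) := by
  have hz : (0 : B) ≤ 1 - y := sub_nonneg.mpr hy1
  have hz1 : (1 : B) - y ≤ 1 := sub_le_self _ hy
  set sy := sqrtCFC y with hsy_def
  set sz := sqrtCFC (1 - y) with hsz_def
  have hsy0 : (0 : B) ≤ sy := cfc_nonneg fun t _ => Real.sqrt_nonneg _
  have hsz0 : (0 : B) ≤ sz := cfc_nonneg fun t _ => Real.sqrt_nonneg _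
  have hsyy : sy * sy = y := mul_self_sqrtCFC hy
  have hszz : sz * sz = 1 - y := mul_self_sqrtCFC hz
  have ha' : (0 : B) ≤ sy * x * sy := conjugate_nonneg_of_nonneg hx hsy0
  rw [dRank_eq (φ := φ) x]
  refine ciSup_le fun n => ?_
  have hfc : Continuous (auxFn n) := auxFn_cont n
  set v := cfc (fun t : ℝ => Real.sqrt (auxFn n t)) x with hv_def
  have hvv : v * v = cfc (auxFn n) x :=
    cfc_sqrt_sq _ hfc x hx.isSelfAdjoint
      fun t ht => auxFn_nonneg (spectrum_nonneg_of_nonneg hx ht)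
  have hf1 : cfc (auxFn n) x ≤ 1 := cfc_le_one _ _ fun t _ => min_le_right _ _
  have hf0 : (0 : B) ≤ cfc (auxFn n) x :=
    cfc_nonneg fun t ht => auxFn_nonneg (spectrum_nonneg_of_nonneg hx ht)
  have hdec : v * y * v + v * (1 - y) * v = cfc (auxFn n) x := by
    have h1 : v * y * v + v * (1 - y) * v = v * (y + (1 - y)) * v := by noncomm_ring
    have h2 : y + (1 - y) = (1 : B) := by abel
    rw [h1, h2, mul_one, hvv]
  have e1 : φ (v * y * v) = φ (sy * cfc (auxFn n) x * sy) := by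
    rw [show v * y * v = (v * sy) * (sy * v) from by rw [← hsyy]; noncomm_ring, hφ.tr,
      show (sy * v) * (v * sy) = sy * (v * v) * sy from by noncomm_ring, hvv]
  have e2 : φ (v * (1 - y) * v) = φ (sz * cfc (auxFn n) x * sz) := by
    rw [show v * (1 - y) * v = (v * sz) * (sz * v) from by rw [← hszz]; noncomm_ring, hφ.tr,
      show (sz * v) * (v * sz) = sz * (v * v) * sz from by noncomm_ring, hvv]
  have hp0 : (0 : B) ≤ sy * cfc (auxFn n) x * sy := conjugate_nonneg_of_nonneg hf0 hsy0
  have hp1 : sy * cfc (auxFn n) x * sy ≤ 1 := by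
    have h := conjugate_le_conjugate_of_nonneg hf1 hsy0
    rw [mul_one, hsyy] at h
    exact h.trans hy1
  have hpa : sy * cfc (auxFn n) x * sy ≤ ((n : ℝ) + 1) • (sy * x * sy) := by
    have h1 : cfc (auxFn n) x ≤ ((n : ℝ) + 1) • x := by
      calc cfc (auxFn n) x ≤ cfc (fun t : ℝ => ((n : ℝ) + 1) * t) x :=
            cfc_mono fun t _ => min_le_left _ _
        _ = ((n : ℝ) + 1) • x := cfc_const_mul_id _ x hx.isSelfAdjoint
    calc sy * cfc (auxFn n) x * sy ≤ sy * (((n : ℝ) + 1) • x) * sy :=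
          conjugate_le_conjugate_of_nonneg h1 hsy0
      _ = ((n : ℝ) + 1) • (sy * x * sy) := by rw [mul_smul_comm, smul_mul_assoc]
  have hb1 : (φ (sy * cfc (auxFn n) x * sy)).re ≤ dRank φ (sy * x * sy) :=
    hφ.L1 ha' hp0 hp1 (by positivity) hpa
  have hq : sz * cfc (auxFn n) x * sz ≤ 1 - y := by
    have h := conjugate_le_conjugate_of_nonneg hf1 hsz0
    rwa [mul_one, hszz] at h
  have hzb : (φ (1 - y)).re ≤ dRank φ (1 - y) := by
    have hspec : ∀ t ∈ spectrum ℝ ((1 : B) - y), t ≤ 1 :=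
      (le_algebraMap_iff_spectrum_le (ha := hz.isSelfAdjoint)).mp (by rw [map_one]; exact hz1)
    have hle : (1 : B) - y ≤ cfc (auxFn 0) (1 - y) := by
      conv_lhs => rw [← cfc_id ℝ ((1 : B) - y) hz.isSelfAdjoint]
      refine cfc_mono (fun t ht => le_min (by norm_num) (hspec t ht)) continuousOn_id
        (auxFn_cont 0).continuousOn
    exact (hφ.mono hle).trans (hφ.term_le_dRank hz 0)
  have hb2 : (φ (sz * cfc (auxFn n) x * sz)).re ≤ dRank φ (1 - y) := (hφ.mono hq).trans hzb
  calc (φ (cfc (auxFn n) x)).re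
      = (φ (v * y * v)).re + (φ (v * (1 - y) * v)).re := by
        rw [← hdec, hφ.add, Complex.add_re]
    _ = (φ (sy * cfc (auxFn n) x * sy)).re + (φ (sz * cfc (auxFn n) x * sz)).re := by
        rw [e1, e2]
    _ ≤ _ := add_le_add hb1 hb2

end AuxGood

private lemma matTr_good {A : Type u} [CStarAlgebra A] {τ : WeakDual ℂ A} (hτ : τ ∈ TS A)
    {k : ℕ} {B : Type v} [CStarAlgebra B] [PartialOrder B] [StarOrderedRing B]
    (e : Mat k A ≃⋆ₐ[ℂ] B) : AuxGood (matTr τ e) := by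
  obtain ⟨h1, hpos, htr⟩ := hτ
  refine ⟨?_, ?_, ?_, ?_⟩
  · intro a b
    simp [matTr, map_add, Matrix.add_apply, Finset.sum_add_distrib]
  · intro r b
    simp only [matTr, ← Complex.coe_smul, _root_.map_smul, Matrix.smul_apply, smul_eq_mul,
      ← Finset.mul_sum]
  · intro b hb
    have hs : sqrtCFC b * sqrtCFC b = b := mul_self_sqrtCFC hb
    have hsa : IsSelfAdjoint (sqrtCFC b) :=
      (cfc_nonneg (fun t _ => Real.sqrt_nonneg t) : (0 : B) ≤ sqrtCFC b).isSelfAdjoint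
    set M := e.symm (sqrtCFC b) with hM
    have hb' : e.symm b = star M * M := by
      rw [← hs, map_mul]
      congr 1
      rw [hM, ← map_star]
      congr 1
      exact hsa.star_eq.symm
    have hterm : ∀ i, 0 ≤ τ ((star M * M) i i) := by
      intro i
      rw [Matrix.mul_apply, map_sum]
      refine Finset.sum_nonneg fun j _ => ?_
      rw [Matrix.star_apply]
      exact hpos (M j i)
    have hsum : 0 ≤ ∑ i, τ ((star M * M) i i) := Finset.sum_nonneg fun i _ => hterm i
    have : (matTr τ e) b = ∑ i, τ ((star M * M) i i) := by
      simp [matTr, hb']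
    rw [this]
    simpa using (Complex.le_def.mp hsum).1
  · intro a b
    simp only [matTr, map_mul]
    calc ∑ i, τ ((e.symm a * e.symm b) i i)
        = ∑ i, ∑ j, τ (e.symm a i j * e.symm b j i) := by
          simp [Matrix.mul_apply, map_sum]
      _ = ∑ i, ∑ j, τ (e.symm b j i * e.symm a i j) := by
          refine Finset.sum_congr rfl fun i _ => Finset.sum_congr rfl fun j _ => htr _ _
      _ = ∑ j, ∑ i, τ (e.symm b j i * e.symm a i j) := Finset.sum_comm
      _ = ∑ j, τ ((e.symm b * e.symm a) j j) := by
          simp [Matrix.mul_apply, map_sum]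

end Aux

theorem stmt_3 {A : Type u} [CStarAlgebra A] {τ : WeakDual ℂ A} (hτ : τ ∈ TS A)
    {k : ℕ} {B : Type v} [CStarAlgebra B] [PartialOrder B] [StarOrderedRing B]
    (e : Mat k A ≃⋆ₐ[ℂ] B) (x y : B) (hx : 0 ≤ x) (hy : 0 ≤ y) (hy1 : y ≤ 1) :
    dRank (matTr τ e) x - dRank (matTr τ e) (1 - y) ≤
      dRank (matTr τ e) (sqrtCFC y * x * sqrtCFC y) := by
  have hφ := matTr_good hτ e
  have h := hφ.main hx hy hy1
  linarith

end
end
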